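/- Let X be a Banach space with dim X = κ ≥ ω, and let D be a τ-regular ultrafilter on a set I of cardinality τ. Then dim((X)_D) = κ^τ (cardinal exponentiation). -/

import Mathlib

open Filter Topology
open scoped ENNReal

noncomputable section

universe u

/-- The subspace `N_D ⊆ ℓ∞(I, X)` of families whose norms tend to `0` along the
ultrafilter `D`. -/
def ultraNullIdeal (I : Type u) (D : Ultrafilter I) (X : Type u)
    [NormedAddCommGroup X] [NormedSpace ℝ X] :
    Submodule ℝ (lp (fun _ : I => X) ∞) where
  carrier := {f | Filter.Tendsto (fun i => ‖f i‖) (D : Filter I) (nhds 0)}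
  zero_mem' := by
    simpa using (tendsto_const_nhds :
      Filter.Tendsto (fun _ : I => (0 : ℝ)) (D : Filter I) (nhds 0))
  add_mem' := by
    intro f g hf hg
    have h := hf.add hg
    rw [add_zero] at h
    refine squeeze_zero (fun i => norm_nonneg _) (fun i => ?_) h
    simpa using norm_add_le (f i) (g i)
  smul_mem' := by
    intro c f hf
    have h : Filter.Tendsto (fun i => ‖c‖ * ‖f i‖) (D : Filter I) (nhds 0) := by
      simpa using hf.const_mul ‖c‖
    refine squeeze_zero (fun i => norm_nonneg _) (fun i => ?_) h
    simp [norm_smul]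

/-- The Banach-space ultrapower `(X)_D = ℓ∞(I,X) / N_D`, with the quotient norm. -/
abbrev Ultrapower (I : Type u) (D : Ultrafilter I) (X : Type u)
    [NormedAddCommGroup X] [NormedSpace ℝ X] : Type u :=
  lp (fun _ : I => X) ∞ ⧸ ultraNullIdeal I D X

/-- The bounded family constantly equal to `x`, as an element of `ℓ∞(I, X)`. -/
def constLp (I : Type u) (X : Type u) [NormedAddCommGroup X] [NormedSpace ℝ X] (x : X) :
    lp (fun _ : I => X) ∞ :=
  ⟨fun _ => x, memℓp_infty ⟨‖x‖, by rintro r ⟨i, rfl⟩; exact le_rfl⟩⟩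

/-- The canonical (diagonal) embedding `d_X : X → (X)_D`. -/
def diagEmbedding (I : Type u) (D : Ultrafilter I) (X : Type u)
    [NormedAddCommGroup X] [NormedSpace ℝ X] (x : X) : Ultrapower I D X :=
  Submodule.Quotient.mk (constLp I X x)

/-- The dimension of a normed space: the least cardinality of a subset whose closed linear
span is the whole space (for infinite-dimensional spaces this is the density character). -/
noncomputable def bdim (X : Type u) [SeminormedAddCommGroup X] [NormedSpace ℝ X] :
    Cardinal.{u} :=
  sInf {c : Cardinal.{u} |
    ∃ A : Set X, Cardinal.mk A = c ∧ (Submodule.span ℝ A).topologicalClosure = ⊤}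

/-- An ultrafilter `D` on `I` is `τ`-regular if some `G ⊆ D` of cardinality `τ` is such that
every `i ∈ I` belongs to only finitely many members of `G`. -/
def UltrafilterRegular {I : Type u} (D : Ultrafilter I) (τ : Cardinal.{u}) : Prop :=
  ∃ G : Set (Set I), (∀ g ∈ G, g ∈ D) ∧ Cardinal.mk G = τ ∧
    ∀ i : I, {e ∈ G | i ∈ e}.Finite


section Aux

variable {Y : Type u} [SeminormedAddCommGroup Y] [NormedSpace ℝ Y]

/-- rational combinations of elements of A -/
def ratCombo (A : Set Y) : Set Y :=
  Set.range (fun l : List (ℚ × A) => (l.map fun p => (p.1 : ℝ) • (p.2 : Y)).sum)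

lemma zero_mem_ratCombo (A : Set Y) : (0 : Y) ∈ ratCombo A := ⟨[], rfl⟩

lemma add_mem_ratCombo {A : Set Y} {x y : Y} (hx : x ∈ ratCombo A) (hy : y ∈ ratCombo A) :
    x + y ∈ ratCombo A := by
  obtain ⟨l, rfl⟩ := hx; obtain ⟨m, rfl⟩ := hy
  exact ⟨l ++ m, by simp⟩

lemma smul_mem_ratCombo {A : Set Y} (q : ℚ) {x : Y} (hx : x ∈ ratCombo A) :
    (q : ℝ) • x ∈ ratCombo A := by
  obtain ⟨l, rfl⟩ := hx
  refine ⟨l.map fun p => (q * p.1, p.2), ?_⟩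
  simp [List.map_map, Function.comp_def, List.smul_sum, mul_smul]

lemma subset_ratCombo (A : Set Y) : A ⊆ ratCombo A := by
  intro a ha
  exact ⟨[(1, ⟨a, ha⟩)], by simp⟩

lemma mk_ratCombo_le (A : Set Y) : Cardinal.mk (ratCombo A) ≤ max Cardinal.aleph0 (Cardinal.mk A) := by
  refine le_trans (Cardinal.mk_range_le) ?_
  refine le_trans (Cardinal.mk_list_le_max _) ?_
  have h2 : Cardinal.mk (ℚ × A) ≤ max Cardinal.aleph0 (Cardinal.mk A) := by
    have e : Cardinal.mk (ℚ × A) = Cardinal.aleph0 * Cardinal.mk A := by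
      rw [Cardinal.mk_prod]; simp
    rw [e]
    calc Cardinal.aleph0 * Cardinal.mk A
        ≤ max (max Cardinal.aleph0 (Cardinal.mk A)) Cardinal.aleph0 := Cardinal.mul_le_max _ _
      _ ≤ max Cardinal.aleph0 (Cardinal.mk A) := by simp [max_comm]
  simpa using max_le (le_max_left _ _) h2

lemma span_subset_closure_ratCombo (A : Set Y) :
    (Submodule.span ℝ A : Set Y) ⊆ closure (ratCombo A) := by
  intro x hx
  induction hx using Submodule.span_induction with
  | mem a ha => exact subset_closure (subset_ratCombo A ha)
  | zero => exact subset_closure (zero_mem_ratCombo A)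
  | add x y _ _ hx hy =>
    rw [Metric.mem_closure_iff] at *
    intro ε εpos
    obtain ⟨r, hr, hxr⟩ := hx (ε/2) (by linarith)
    obtain ⟨s, hs, hys⟩ := hy (ε/2) (by linarith)
    exact ⟨r + s, add_mem_ratCombo hr hs,
      lt_of_le_of_lt (dist_add_add_le _ _ _ _) (by linarith)⟩
  | smul c x _ hx =>
    rw [Metric.mem_closure_iff] at *
    intro ε εpos
    have hδ : 0 < ε / (2 * (‖x‖ + 1)) := by positivity
    obtain ⟨q, hq⟩ := exists_rat_near c hδ
    have hδ2 : 0 < ε / (2 * (|(q:ℝ)| + 1)) := by positivity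
    obtain ⟨r, hr, hxr⟩ := hx _ hδ2
    refine ⟨(q : ℝ) • r, smul_mem_ratCombo q hr, ?_⟩
    have h1 : dist (c • x) ((q:ℝ) • x) ≤ |c - (q:ℝ)| * ‖x‖ := by
      rw [dist_eq_norm, ← sub_smul, norm_smul]
      simp [Real.norm_eq_abs]
    have h2 : dist ((q:ℝ) • x) ((q:ℝ) • r) ≤ |(q:ℝ)| * dist x r := by
      rw [dist_eq_norm, ← smul_sub, norm_smul, Real.norm_eq_abs, ← dist_eq_norm]
    have hxn : (0:ℝ) ≤ ‖x‖ := norm_nonneg x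
    have e1 : |c - (q:ℝ)| * ‖x‖ < ε / 2 := by
      have : |c - (q:ℝ)| * ‖x‖ ≤ (ε / (2 * (‖x‖ + 1))) * ‖x‖ :=
        mul_le_mul_of_nonneg_right hq.le hxn
      refine lt_of_le_of_lt this ?_
      rw [div_mul_eq_mul_div, div_lt_iff₀ (by positivity)]
      ring_nf
      nlinarith
    have e2 : |(q:ℝ)| * dist x r < ε / 2 := by
      have hq0 : (0:ℝ) ≤ |(q:ℝ)| := abs_nonneg _
      have : |(q:ℝ)| * dist x r ≤ |(q:ℝ)| * (ε / (2 * (|(q:ℝ)| + 1))) :=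
        mul_le_mul_of_nonneg_left hxr.le hq0
      refine lt_of_le_of_lt this ?_
      rw [mul_div_assoc']
      rw [div_lt_iff₀ (by positivity)]
      nlinarith
    calc dist (c • x) ((q:ℝ) • r) ≤ _ + _ := dist_triangle _ ((q:ℝ) • x) _
      _ ≤ |c - (q:ℝ)| * ‖x‖ + |(q:ℝ)| * dist x r := add_le_add h1 h2
      _ < ε := by linarith

lemma ratCombo_dense {A : Set Y}
    (hA : (Submodule.span ℝ A).topologicalClosure = ⊤) :
    closure (ratCombo A) = Set.univ := by
  apply Set.eq_univ_of_univ_subset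
  have h1 : (Submodule.span ℝ A).topologicalClosure = ⊤ := hA
  have h2 : closure (Submodule.span ℝ A : Set Y) = Set.univ := by
    have := congrArg (fun S : Submodule ℝ Y => (S : Set Y)) h1
    simpa [Submodule.topologicalClosure_coe] using this
  calc (Set.univ : Set Y) = closure (Submodule.span ℝ A : Set Y) := h2.symm
    _ ⊆ closure (closure (ratCombo A)) :=
        closure_mono (span_subset_closure_ratCombo A)
    _ = closure (ratCombo A) := closure_closure

/-- the defining set for bdim -/
def bdimSet (Y : Type u) [SeminormedAddCommGroup Y] [NormedSpace ℝ Y] : Set Cardinal.{u} :=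
  {c : Cardinal.{u} |
    ∃ A : Set Y, Cardinal.mk A = c ∧ (Submodule.span ℝ A).topologicalClosure = ⊤}

lemma bdimSet_nonempty (Y : Type u) [SeminormedAddCommGroup Y] [NormedSpace ℝ Y] :
    (bdimSet Y).Nonempty :=
  ⟨_, Set.univ, rfl, by
    rw [Submodule.span_univ]
    exact le_antisymm le_top (Submodule.le_topologicalClosure ⊤)⟩

/-- a δ-separated set has cardinality at most `max ℵ₀ #A` for any densely-spanning A. -/
lemma sep_card_le {T A : Set Y} {δ : ℝ} (hδ : 0 < δ)
    (hT : ∀ a ∈ T, ∀ b ∈ T, a ≠ b → δ ≤ dist a b)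
    (hA : (Submodule.span ℝ A).topologicalClosure = ⊤) :
    Cardinal.mk T ≤ max Cardinal.aleph0 (Cardinal.mk A) := by
  have hdense := ratCombo_dense hA
  have hc : ∀ t : T, ∃ r : ratCombo A, dist (t : Y) (r : Y) < δ / 2 := by
    intro t
    have : (t : Y) ∈ closure (ratCombo A) := hdense ▸ Set.mem_univ _
    rw [Metric.mem_closure_iff] at this
    obtain ⟨r, hr, hdist⟩ := this (δ/2) (by linarith)
    exact ⟨⟨r, hr⟩, hdist⟩
  choose F hF using hc
  have hinj : Function.Injective F := by
    intro t t' h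
    by_contra hne
    have hne' : (t : Y) ≠ (t' : Y) := fun hc => hne (Subtype.ext hc)
    have h1 : dist (t : Y) ((F t' : Y)) < δ/2 := by rw [← h]; exact hF t
    have h2 : dist ((F t' : Y)) (t' : Y) < δ/2 := by rw [dist_comm]; exact hF t'
    have h3 := dist_triangle (t : Y) ((F t' : Y)) (t' : Y)
    linarith [hT _ t.2 _ t'.2 hne']
  exact le_trans (Cardinal.mk_le_of_injective hinj) (mk_ratCombo_le A)

lemma bdim_le_of_dense_span {A : Set Y}
    (hA : (Submodule.span ℝ A).topologicalClosure = ⊤) :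
    sInf (bdimSet Y) ≤ Cardinal.mk A :=
  csInf_le (OrderBot.bddBelow _) ⟨A, rfl, hA⟩

/-- Existence of a separated spanning set via Zorn. -/
lemma exists_separated_set (X : Type u) [NormedAddCommGroup X] [NormedSpace ℝ X] :
    ∃ S : Set X, (∀ x ∈ S, ‖x‖ = 1) ∧
      (∀ a ∈ S, ∀ b ∈ S, a ≠ b → (1/2 : ℝ) ≤ dist a b) ∧
      sInf (bdimSet X) ≤ Cardinal.mk S := by
  set 𝒮 : Set (Set X) := {S | (∀ x ∈ S, ‖x‖ = 1) ∧
      ∀ a ∈ S, ∀ b ∈ S, a ≠ b → (1/2 : ℝ) ≤ dist a b} with h𝒮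
  obtain ⟨S, hSmax⟩ : ∃ m, Maximal (· ∈ 𝒮) m := by
    apply zorn_subset
    intro c hc hchain
    refine ⟨⋃₀ c, ⟨?_, ?_⟩, fun s hs => Set.subset_sUnion_of_mem hs⟩
    · rintro x ⟨s, hs, hxs⟩
      exact (hc hs).1 x hxs
    · rintro a ⟨s, hs, has⟩ b ⟨t, ht, hbt⟩ hab
      rcases hchain.total hs ht with hst | hts
      · exact (hc ht).2 a (hst has) b hbt hab
      · exact (hc hs).2 a has b (hts hbt) hab
  have hSunit := hSmax.1.1
  have hSsep := hSmax.1.2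
  refine ⟨S, hSunit, hSsep, ?_⟩
  apply bdim_le_of_dense_span
  -- key step: every x is 3/4-approximated in the span
  have key : ∀ x : X, ∃ y ∈ Submodule.span ℝ S, ‖x - y‖ ≤ (3/4) * ‖x‖ := by
    intro x
    rcases eq_or_ne x 0 with rfl | hx
    · exact ⟨0, Submodule.zero_mem _, by simp⟩
    · have hxn : (0:ℝ) < ‖x‖ := norm_pos_iff.mpr hx
      set u := ‖x‖⁻¹ • x with hu
      have hun : ‖u‖ = 1 := by
        rw [hu, norm_smul, norm_inv, norm_norm, inv_mul_cancel₀ hxn.ne']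
      have hxu : x = ‖x‖ • u := by
        rw [hu, smul_smul, mul_inv_cancel₀ hxn.ne', one_smul]
      by_cases hcase : ∃ s ∈ S, dist u s < 1/2
      · obtain ⟨s, hs, hus⟩ := hcase
        refine ⟨‖x‖ • s, Submodule.smul_mem _ _ (Submodule.subset_span hs), ?_⟩
        have e : x - ‖x‖ • s = ‖x‖ • (u - s) := by rw [smul_sub, ← hxu]
        calc ‖x - ‖x‖ • s‖ = ‖x‖ * ‖u - s‖ := by rw [e, norm_smul, norm_norm]
          _ ≤ ‖x‖ * (1/2) := by
              apply mul_le_mul_of_nonneg_left _ hxn.le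
              rw [← dist_eq_norm]; linarith
          _ ≤ (3/4) * ‖x‖ := by nlinarith
      · push_neg at hcase
        -- u must be in S by maximality
        have huS : u ∈ S := by
          by_contra huS
          have hbig : S ∪ {u} ∈ 𝒮 := by
            constructor
            · rintro z (hz | rfl)
              · exact hSunit z hz
              · exact hun
            · rintro a (ha | rfl) b (hb | rfl) hab
              · exact hSsep a ha b hb hab
              · rw [dist_comm]; exact hcase a ha
              · exact hcase b hb
              · exact absurd rfl hab
          have : S ∪ {u} ⊆ S := hSmax.2 hbig Set.subset_union_left
          exact huS (this (Set.mem_union_right _ rfl))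
        refine ⟨x, ?_, by simp [hxn.le]⟩
        rw [hxu]
        exact Submodule.smul_mem _ _ (Submodule.subset_span huS)
  -- iterate
  have iter : ∀ n : ℕ, ∀ x : X, ∃ y ∈ Submodule.span ℝ S, ‖x - y‖ ≤ (3/4)^n * ‖x‖ := by
    intro n
    induction n with
    | zero => intro x; exact ⟨0, Submodule.zero_mem _, by simp⟩
    | succ n ih =>
      intro x
      obtain ⟨y, hy, hxy⟩ := ih x
      obtain ⟨z, hz, hxyz⟩ := key (x - y)
      refine ⟨y + z, Submodule.add_mem _ hy hz, ?_⟩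
      have e2 : x - (y + z) = (x - y) - z := by abel
      rw [e2]
      calc ‖(x - y) - z‖ ≤ (3/4) * ‖x - y‖ := hxyz
        _ ≤ (3/4) * ((3/4)^n * ‖x‖) := by linarith
        _ = (3/4)^(n+1) * ‖x‖ := by ring
  rw [Submodule.eq_top_iff']
  intro x
  have hmem : x ∈ closure (Submodule.span ℝ S : Set X) := by
    rw [Metric.mem_closure_iff]
    intro ε εpos
    obtain ⟨n, hn⟩ : ∃ n : ℕ, (3/4:ℝ)^n * ‖x‖ < ε := by
      have h34 : |(3/4 : ℝ)| < 1 := by rw [abs_of_pos] <;> norm_num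
      have h1 := (tendsto_pow_atTop_nhds_zero_of_abs_lt_one h34).mul_const ‖x‖
      rw [zero_mul] at h1
      exact (h1.eventually (gt_mem_nhds εpos)).exists
    obtain ⟨y, hy, hxy⟩ := iter n x
    exact ⟨y, hy, by rw [dist_eq_norm]; linarith⟩
  exact hmem

end Aux
section Aux2
variable {I : Type u} {D : Ultrafilter I} {X : Type u}
  [NormedAddCommGroup X] [NormedSpace ℝ X]

lemma mem_ultraNullIdeal_iff (f : lp (fun _ : I => X) ∞) :
    f ∈ ultraNullIdeal I D X ↔
      Filter.Tendsto (fun i => ‖f i‖) (D : Filter I) (nhds 0) := Iff.rfl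

/-- Lower bound on the quotient seminorm from a `D`-large separation. -/
lemma quot_norm_lower (w : lp (fun _ : I => X) ∞) {δ : ℝ}
    (hw : {i | δ ≤ ‖w i‖} ∈ D) :
    δ ≤ ‖(Submodule.Quotient.mk w : Ultrapower I D X)‖ := by
  by_contra hlt
  push_neg at hlt
  have hδpos : 0 < δ - ‖(Submodule.Quotient.mk w : Ultrapower I D X)‖ := by linarith
  obtain ⟨m, hm, hmlt⟩ :=
    Submodule.Quotient.norm_mk_lt (Submodule.Quotient.mk w : Ultrapower I D X) hδpos
  have hmδ : ‖m‖ < δ := by linarith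
  have hn : m - w ∈ ultraNullIdeal I D X := (Submodule.Quotient.eq _).mp hm
  set ε : ℝ := (δ - ‖m‖) / 2 with hε
  have hεpos : 0 < ε := by simp only [hε]; linarith
  have hsmall : {i | ‖(m - w) i‖ < ε} ∈ D := by
    have := (mem_ultraNullIdeal_iff (D := D) (m - w)).mp hn
    have h2 : {x : ℝ | x < ε} ∈ nhds (0:ℝ) := Iio_mem_nhds hεpos
    exact this h2
  obtain ⟨i₀, hi₁, hi₂⟩ := Filter.nonempty_of_mem (Filter.inter_mem hw hsmall)
  simp only [Set.mem_setOf_eq] at hi₁ hi₂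
  have hcoe : (m - w) i₀ = m i₀ - w i₀ := by
    rw [lp.coeFn_sub]; rfl
  have h3 : ‖w i₀‖ ≤ ‖m i₀‖ + ‖(m - w) i₀‖ := by
    have : w i₀ = m i₀ - (m i₀ - w i₀) := by abel
    rw [this, ← hcoe]
    exact norm_sub_le _ _
  have h4 : ‖m i₀‖ ≤ ‖m‖ := lp.norm_apply_le_norm (by norm_num) m i₀
  have : δ ≤ ‖m‖ + ε := by linarith
  simp only [hε] at this
  linarith

lemma nonempty_I (D : Ultrafilter I) : Nonempty I := Filter.nonempty_of_neBot (D : Filter I)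

/-- Upper bound: a dense subset of X of cardinality μ gives a dense subset of the
ultrapower of cardinality at most `μ ^ #I`. -/
lemma bdim_ultrapower_le (R : Set X) (hR : closure R = Set.univ) (hR0 : (0:X) ∈ R) :
    ∃ B : Set (Ultrapower I D X),
      Cardinal.mk B ≤ Cardinal.mk R ^ Cardinal.mk I ∧
      (Submodule.span ℝ B).topologicalClosure = ⊤ := by
  haveI : Nonempty I := nonempty_I D
  classical
  set T : Set (lp (fun _ : I => X) ∞) := {f | ∀ i, f i ∈ R} with hT
  -- cardinality of T
  have hTcard : Cardinal.mk T ≤ Cardinal.mk R ^ Cardinal.mk I := by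
    have : Cardinal.mk T ≤ Cardinal.mk (I → R) := by
      refine Cardinal.mk_le_of_injective
        (f := fun f : T => fun i => (⟨(f.1 : ∀ _ : I, X) i, f.2 i⟩ : R)) ?_
      intro f g h
      apply Subtype.ext
      apply lp.ext
      funext i
      exact congrArg Subtype.val (congrFun h i)
    simpa [← Cardinal.power_def] using this
  -- density of T
  have hTdense : closure T = Set.univ := by
    apply Set.eq_univ_of_forall
    intro f
    rw [Metric.mem_closure_iff]
    intro ε εpos
    have hchoice : ∀ i : I, ∃ r ∈ R, dist (f i) r < ε / 2 := by
      intro i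
      have : f i ∈ closure R := hR ▸ Set.mem_univ _
      rw [Metric.mem_closure_iff] at this
      exact this _ (by linarith)
    choose r hrR hrd using hchoice
    have hrmem : Memℓp r ∞ := by
      apply memℓp_infty
      refine ⟨‖f‖ + ε/2, ?_⟩
      rintro x ⟨i, rfl⟩
      have h1 : ‖r i‖ ≤ ‖f i‖ + dist (f i) (r i) := by
        rw [dist_eq_norm]
        have h0 := norm_sub_le ((f:∀ _ : I, X) i) ((f:∀ _ : I, X) i - r i)
        rw [sub_sub_cancel] at h0
        exact h0
      have h2 := lp.norm_apply_le_norm (by norm_num : (∞ : ℝ≥0∞) ≠ 0) f i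
      linarith [hrd i]
    refine ⟨⟨r, hrmem⟩, fun i => hrR i, ?_⟩
    rw [dist_eq_norm]
    have : ‖f - (⟨r, hrmem⟩ : lp (fun _ : I => X) ∞)‖ ≤ ε/2 := by
      apply lp.norm_le_of_forall_le' (ε/2)
      intro i
      have : (f - (⟨r, hrmem⟩ : lp (fun _ : I => X) ∞)) i = f i - r i := by
        rw [lp.coeFn_sub]; rfl
      rw [this, ← dist_eq_norm]
      exact (hrd i).le
    linarith
  -- push to the quotient
  set q : lp (fun _ : I => X) ∞ →ₗ[ℝ] Ultrapower I D X := (ultraNullIdeal I D X).mkQ with hq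
  have hqlip : LipschitzWith 1 q := by
    apply LipschitzWith.of_dist_le_mul
    intro a b
    rw [dist_eq_norm, dist_eq_norm, ← map_sub]
    rw [NNReal.coe_one, one_mul]
    exact Submodule.Quotient.norm_mk_le _ (a - b)
  refine ⟨q '' T, le_trans (Cardinal.mk_image_le) hTcard, ?_⟩
  have hdense : closure (q '' T) = Set.univ := by
    apply Set.eq_univ_of_univ_subset
    have hsurj : Set.range q = Set.univ :=
      Set.range_eq_univ.mpr (Submodule.mkQ_surjective _)
    calc (Set.univ : Set (Ultrapower I D X)) = q '' Set.univ := by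
          rw [Set.image_univ, hsurj]
      _ = q '' closure T := by rw [hTdense]
      _ ⊆ closure (q '' T) := image_closure_subset_closure_image hqlip.continuous
  rw [Submodule.eq_top_iff']
  intro x
  have : x ∈ closure (Submodule.span ℝ (q '' T) : Set (Ultrapower I D X)) := by
    apply closure_mono (Submodule.subset_span (s := q '' T))
    rw [hdense]; exact Set.mem_univ x
  exact this

lemma list_map_eq_imp {α β : Type*} {l : List α} {f g : α → β}
    (h : l.map f = l.map g) : ∀ a ∈ l, f a = g a := by
  induction l with
  | nil => intro a ha; simp at ha
  | cons x xs ih =>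
    simp only [List.map_cons, List.cons.injEq] at h
    intro a ha
    rcases List.mem_cons.mp ha with rfl | ha
    · exact h.1
    · exact ih h.2 a ha

lemma keisler_separated (S : Set X) (hS1 : ∀ x ∈ S, ‖x‖ = 1)
    (hS2 : ∀ a ∈ S, ∀ b ∈ S, a ≠ b → (1/2 : ℝ) ≤ dist a b) [Infinite ↥S]
    (Gset : Set (Set I)) (hG1 : ∀ g ∈ Gset, g ∈ D)
    (hG3 : ∀ i : I, {e ∈ Gset | i ∈ e}.Finite) :
    ∃ T : Set (Ultrapower I D X),
      (∀ a ∈ T, ∀ b ∈ T, a ≠ b → (1/2 : ℝ) ≤ dist a b) ∧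
      Cardinal.mk ↥S ^ Cardinal.mk ↥Gset ≤ Cardinal.mk T := by
  classical
  let L : LinearOrder ↥Gset := IsWellOrder.linearOrder WellOrderingRel
  let r : ↥Gset → ↥Gset → Prop := L.le
  haveI : IsTotal ↥Gset r := ⟨L.le_total⟩
  haveI : IsTrans ↥Gset r := ⟨fun a b c => L.le_trans a b c⟩
  haveI : IsAntisymm ↥Gset r := ⟨fun a b => L.le_antisymm a b⟩
  obtain ⟨η⟩ := Cardinal.eq.mp (Cardinal.mk_list_eq_mk ↥S)
  have hfin : ∀ i : I, {g : ↥Gset | i ∈ (g : Set I)}.Finite := by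
    intro i
    have he : {g : ↥Gset | i ∈ (g : Set I)} = Subtype.val ⁻¹' {e | e ∈ Gset ∧ i ∈ e} := by
      ext g; simp [g.2]
    rw [he]
    exact Set.Finite.preimage (Subtype.val_injective.injOn) (hG3 i)
  set lst : I → List ↥Gset := fun i => ((hfin i).toFinset).sort r with hlst
  have hmem_lst : ∀ (i : I) (g : ↥Gset), g ∈ lst i ↔ i ∈ (g : Set I) := by
    intro i g
    rw [hlst]
    simp only [Finset.mem_sort, Set.Finite.mem_toFinset, Set.mem_setOf_eq]
  set y : (↥Gset → ↥S) → lp (fun _ : I => X) ∞ := fun f =>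
    ⟨fun i => ((η ((lst i).map f)) : X), memℓp_infty ⟨1, by
      rintro r ⟨i, rfl⟩
      exact le_of_eq (hS1 _ (η ((lst i).map f)).2)⟩⟩ with hy
  have hsep : ∀ f f' : ↥Gset → ↥S, f ≠ f' →
      (1/2 : ℝ) ≤ ‖(Submodule.Quotient.mk (y f - y f') : Ultrapower I D X)‖ := by
    intro f f' hne
    have hex : ∃ g₀ : ↥Gset, f g₀ ≠ f' g₀ := by
      by_contra h
      push_neg at h
      exact hne (funext h)
    obtain ⟨g₀, hg₀⟩ := hex
    apply quot_norm_lower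
    have hDg : (g₀ : Set I) ∈ D := hG1 _ g₀.2
    apply Filter.mem_of_superset hDg
    intro i hi
    simp only [Set.mem_setOf_eq]
    have hil : g₀ ∈ lst i := (hmem_lst i g₀).mpr hi
    have hlist : (lst i).map f ≠ (lst i).map f' := by
      intro h
      exact hg₀ (list_map_eq_imp h g₀ hil)
    have hη : η ((lst i).map f) ≠ η ((lst i).map f') := fun h => hlist (η.injective h)
    have hηc : ((η ((lst i).map f)) : X) ≠ ((η ((lst i).map f')) : X) :=
      fun h => hη (Subtype.ext h)
    have hd := hS2 _ (η ((lst i).map f)).2 _ (η ((lst i).map f')).2 hηc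
    rw [dist_eq_norm] at hd
    have hcoe : (y f - y f') i = ((η ((lst i).map f)) : X) - ((η ((lst i).map f')) : X) := by
      rw [lp.coeFn_sub]; rfl
    rw [hcoe]
    exact hd
  set u : (↥Gset → ↥S) → Ultrapower I D X := fun f => Submodule.Quotient.mk (y f) with hu
  have humk : ∀ f f', u f - u f' = (Submodule.Quotient.mk (y f - y f') : Ultrapower I D X) := by
    intro f f'
    rw [hu]
    exact (Submodule.Quotient.mk_sub _).symm
  have huinj : Function.Injective u := by
    intro f f' h
    by_contra hne
    have := hsep f f' hne
    rw [← humk, h, sub_self] at this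
    simp at this
    linarith
  refine ⟨Set.range u, ?_, ?_⟩
  · rintro a ⟨f, rfl⟩ b ⟨f', rfl⟩ hab
    have hne : f ≠ f' := fun h => hab (congrArg u h)
    rw [dist_eq_norm, humk]
    exact hsep f f' hne
  · rw [Cardinal.mk_range_eq _ huinj, ← Cardinal.power_def]

section PureCase
variable (i₀ : I)

def evL (i₀ : I) : lp (fun _ : I => X) ∞ →ₗ[ℝ] X where
  toFun f := f i₀
  map_add' f g := rfl
  map_smul' c f := rfl

lemma null_apply_eq_zero (hD : D = pure i₀) {f : lp (fun _ : I => X) ∞}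
    (hf : f ∈ ultraNullIdeal I D X) : f i₀ = 0 := by
  have ht : Filter.Tendsto (fun i => ‖f i‖) (pure i₀ : Filter I) (nhds 0) := by
    have := (mem_ultraNullIdeal_iff (D := D) f).mp hf
    rwa [hD, Ultrafilter.coe_pure] at this
  rw [Filter.tendsto_pure_left] at ht
  by_contra hne
  have hpos : 0 < ‖f i₀‖ := norm_pos_iff.mpr hne
  have := ht (Metric.ball (0:ℝ) ‖f i₀‖) (Metric.ball_mem_nhds _ hpos)
  rw [Metric.mem_ball, dist_zero_right, Real.norm_eq_abs, abs_of_nonneg (norm_nonneg _)] at this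
  linarith

lemma norm_apply_le_quot_norm (hD : D = pure i₀) (w : lp (fun _ : I => X) ∞) :
    ‖w i₀‖ ≤ ‖(Submodule.Quotient.mk w : Ultrapower I D X)‖ := by
  by_contra hlt
  push_neg at hlt
  have hpos : 0 < ‖w i₀‖ - ‖(Submodule.Quotient.mk w : Ultrapower I D X)‖ := by linarith
  obtain ⟨m, hm, hmlt⟩ :=
    Submodule.Quotient.norm_mk_lt (Submodule.Quotient.mk w : Ultrapower I D X) hpos
  have hn : m - w ∈ ultraNullIdeal I D X := (Submodule.Quotient.eq _).mp hm
  have h0 : (m - w) i₀ = 0 := null_apply_eq_zero i₀ hD hn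
  have hcoe : (m - w) i₀ = m i₀ - w i₀ := by rw [lp.coeFn_sub]; rfl
  have heq : m i₀ = w i₀ := by rw [hcoe] at h0; exact sub_eq_zero.mp h0
  have h4 := lp.norm_apply_le_norm (by norm_num : (∞ : ℝ≥0∞) ≠ 0) m i₀
  rw [heq] at h4
  linarith

lemma bdim_ge_of_pure (hD : D = pure i₀) {A : Set (Ultrapower I D X)}
    (hA : (Submodule.span ℝ A).topologicalClosure = ⊤) :
    sInf (bdimSet X) ≤ Cardinal.mk A := by
  set N := ultraNullIdeal I D X
  have hker : N ≤ LinearMap.ker (evL i₀ : lp (fun _ : I => X) ∞ →ₗ[ℝ] X) := by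
    intro f hf
    simp only [LinearMap.mem_ker]
    exact null_apply_eq_zero i₀ hD hf
  set φ : Ultrapower I D X →ₗ[ℝ] X := Submodule.liftQ N (evL i₀) hker with hφ
  have hφmk : ∀ w : lp (fun _ : I => X) ∞,
      φ (Submodule.Quotient.mk w) = w i₀ := fun w => rfl
  have hφnorm : ∀ a : Ultrapower I D X, ‖φ a‖ ≤ ‖a‖ := by
    intro a
    obtain ⟨w, rfl⟩ := Submodule.Quotient.mk_surjective N a
    rw [hφmk]
    exact norm_apply_le_quot_norm i₀ hD w
  have hφlip : LipschitzWith 1 φ := by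
    apply LipschitzWith.of_dist_le_mul
    intro a b
    rw [NNReal.coe_one, one_mul, dist_eq_norm, dist_eq_norm, ← map_sub]
    exact hφnorm (a - b)
  have hφsurj : Function.Surjective φ := by
    intro x
    exact ⟨Submodule.Quotient.mk (constLp I X x), rfl⟩
  have hBspan : (Submodule.span ℝ (φ '' A)).topologicalClosure = ⊤ := by
    rw [Submodule.eq_top_iff']
    intro x
    have h1 : closure (Submodule.span ℝ A : Set (Ultrapower I D X)) = Set.univ := by
      have := congrArg (fun S : Submodule ℝ (Ultrapower I D X) => (S : Set (Ultrapower I D X))) hA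
      simpa [Submodule.topologicalClosure_coe] using this
    have h2 : (Set.univ : Set X) ⊆ closure (φ '' (Submodule.span ℝ A : Set (Ultrapower I D X))) := by
      intro z _
      obtain ⟨a, rfl⟩ := hφsurj z
      have : a ∈ closure (Submodule.span ℝ A : Set (Ultrapower I D X)) := by
        rw [h1]; exact Set.mem_univ _
      exact image_closure_subset_closure_image hφlip.continuous ⟨a, this, rfl⟩
    have h3 : φ '' (Submodule.span ℝ A : Set (Ultrapower I D X)) ⊆
        (Submodule.span ℝ (φ '' A) : Set X) := by
      rintro z ⟨a, ha, rfl⟩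
      rw [Submodule.span_image]
      exact Submodule.mem_map_of_mem ha
    have : x ∈ closure (Submodule.span ℝ (φ '' A) : Set X) :=
      closure_mono h3 (h2 (Set.mem_univ x))
    exact this
  calc sInf (bdimSet X) ≤ Cardinal.mk (φ '' A) := bdim_le_of_dense_span hBspan
    _ ≤ Cardinal.mk A := Cardinal.mk_image_le

end PureCase

end Aux2

/-- If `dim X = κ ≥ ω` and `D` is a `τ`-regular ultrafilter on a set `I`
of cardinality `τ`, then `dim (X)_D = κ ^ τ` (cardinal exponentiation). -/
theorem bdim_ultrapower_of_regular
    (I : Type u) (D : Ultrafilter I)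
    (X : Type u) [NormedAddCommGroup X] [NormedSpace ℝ X] [CompleteSpace X]
    (κ τ : Cardinal.{u}) (hκ : Cardinal.aleph0 ≤ κ) (hX : bdim X = κ)
    (hI : Cardinal.mk I = τ) (hreg : UltrafilterRegular D τ) :
    bdim (Ultrapower I D X) = κ ^ τ := by
  obtain ⟨Gset, hG1, hG2, hG3⟩ := hreg
  have hbX : sInf (bdimSet X) = κ := hX
  -- upper bound
  have hupper : bdim (Ultrapower I D X) ≤ κ ^ τ := by
    have hmem : sInf (bdimSet X) ∈ bdimSet X := csInf_mem (bdimSet_nonempty X)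
    rw [hbX] at hmem
    obtain ⟨A₀, hA₀card, hA₀span⟩ := hmem
    have hR := ratCombo_dense hA₀span
    have hRcard : Cardinal.mk (ratCombo A₀) ≤ κ := by
      refine le_trans (mk_ratCombo_le A₀) ?_
      rw [hA₀card]
      exact max_le hκ le_rfl
    obtain ⟨B, hBcard, hBspan⟩ :=
      bdim_ultrapower_le (D := D) (ratCombo A₀) hR (zero_mem_ratCombo A₀)
    refine le_trans (bdim_le_of_dense_span hBspan) ?_
    refine le_trans hBcard ?_
    rw [hI]
    exact Cardinal.power_le_power_right hRcard
  by_cases hτ : Cardinal.aleph0 ≤ τ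
  · -- infinite exponent case
    obtain ⟨S, hS1, hS2, hScard⟩ := exists_separated_set X
    rw [hbX] at hScard
    haveI : Infinite ↥S := Cardinal.infinite_iff.mpr (le_trans hκ hScard)
    obtain ⟨T, hTsep, hTcard⟩ := keisler_separated (D := D) S hS1 hS2 Gset hG1 hG3
    have hκτ : κ ^ τ ≤ Cardinal.mk T := by
      refine le_trans ?_ hTcard
      rw [hG2]
      exact Cardinal.power_le_power_right hScard
    have haleph : Cardinal.aleph0 < κ ^ τ := by
      have h2κ : (2 : Cardinal) ≤ κ := by
        refine le_trans ?_ hκ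
        exact_mod_cast (Cardinal.nat_lt_aleph0 2).le
      calc Cardinal.aleph0 ≤ τ := hτ
        _ < 2 ^ τ := Cardinal.cantor τ
        _ ≤ κ ^ τ := Cardinal.power_le_power_right h2κ
    have hlower : κ ^ τ ≤ bdim (Ultrapower I D X) := by
      show κ ^ τ ≤ sInf (bdimSet (Ultrapower I D X))
      refine le_csInf (bdimSet_nonempty _) ?_
      intro c hc
      obtain ⟨A, hAcard, hAspan⟩ := hc
      have hsep := sep_card_le (δ := 1/2) (by norm_num) hTsep hAspan
      have h1 : κ ^ τ ≤ max Cardinal.aleph0 c := by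
        rw [← hAcard]
        exact le_trans hκτ hsep
      rcases max_cases Cardinal.aleph0 c with ⟨hmax, _⟩ | ⟨hmax, _⟩
      · rw [hmax] at h1
        exact absurd h1 (not_le.mpr haleph)
      · rwa [hmax] at h1
    exact le_antisymm hupper hlower
  · -- finite exponent case: D is principal
    push_neg at hτ
    haveI : Finite I := Cardinal.lt_aleph0_iff_finite.mp (hI ▸ hτ)
    haveI : Nonempty I := nonempty_I D
    obtain ⟨i₀, hD⟩ := D.eq_pure_of_finite
    obtain ⟨n, rfl⟩ := Cardinal.lt_aleph0.mp hτ
    have hone : (1 : Cardinal) ≤ (n : Cardinal) := by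
      rw [← hI]
      exact Cardinal.one_le_iff_ne_zero.mpr (Cardinal.mk_ne_zero I)
    have hn : 1 ≤ n := by exact_mod_cast hone
    have hpow : κ ^ ((n : ℕ) : Cardinal) = κ := by
      rw [Cardinal.power_natCast]
      exact Cardinal.power_nat_eq hκ hn
    rw [hpow]
    refine le_antisymm (le_trans hupper (le_of_eq hpow)) ?_
    show κ ≤ sInf (bdimSet (Ultrapower I D X))
    refine le_csInf (bdimSet_nonempty _) ?_
    intro c hc
    obtain ⟨A, hAcard, hAspan⟩ := hc
    have h := bdim_ge_of_pure i₀ hD hAspan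
    rwa [hbX, hAcard] at h
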